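/- For every n ≥ 3, the following identity of polynomials in t holds (this is the paper's recurrence D_n(t) = [(2n-1)t+1]D_{n-1}(t) + 2t(1-t)D_{n-1}'(t) + (1-t)[t^{-1}D_{n-1}^{0,1}(t) - t·D_{n-1}^{≥2}(t)], cleared of the denominator t, which is legitimate since t divides D_{n-1}^{0,1}(t)): t·D_n(t) = [(2n-1)t + 1]·t·D_{n-1}(t) + 2t²(1-t)·D_{n-1}'(t) + (1-t)·[D_{n-1}^{0,1}(t) - t²·D_{n-1}^{≥2}(t)], where ′ denotes the formal derivative of polynomials. -/

import Mathlib

/-- A signed permutation of `{1,…,n}`, encoded as an (unsigned) permutation of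
`Fin n` together with a choice of sign for each position.  The associated
word is `π_1 π_2 ⋯ π_n` where `π_j = ± σ(j)`. -/
abbrev SignedPerm (n : ℕ) := Equiv.Perm (Fin n) × (Fin n → Bool)

namespace SignedPerm

/-- The letter `π_j` of the word of `p`, for `1 ≤ j ≤ n` (and `0` otherwise). -/
def word {n : ℕ} (p : SignedPerm n) (j : ℕ) : ℤ :=
  if h : 1 ≤ j ∧ j ≤ n then
    (if p.2 ⟨j - 1, by omega⟩ then -1 else 1) * ((p.1 ⟨j - 1, by omega⟩ : ℕ) + 1)
  else 0

/-- The letter `π_j`, with the type `D` convention `π_0 = -π_2`. -/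
def entry {n : ℕ} (p : SignedPerm n) (j : ℕ) : ℤ :=
  if j = 0 then -(p.word 2) else p.word j

/-- The set of `D`-descents of `p`: those `i ∈ {0,…,n-1}` with `π_i > π_{i+1}`. -/
def ddes {n : ℕ} (p : SignedPerm n) : Finset ℕ :=
  (Finset.range n).filter fun i => p.entry (i + 1) < p.entry i

/-- The number of `D`-descents of `p`. -/
def d {n : ℕ} (p : SignedPerm n) : ℕ := p.ddes.card

/-- Membership in the type `D` Coxeter group `D_n ⊆ B_n`:
the number of negative letters is even. -/
def inD {n : ℕ} (p : SignedPerm n) : Prop :=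
  Even (Finset.univ.filter (fun i => p.2 i = true)).card

/-- Type '1': descent at position `1` but not at `0`. -/
def type1 {n : ℕ} (p : SignedPerm n) : Prop := 1 ∈ p.ddes ∧ 0 ∉ p.ddes

/-- Type '0,1': descents at both positions `0` and `1`. -/
def type01 {n : ℕ} (p : SignedPerm n) : Prop := 0 ∈ p.ddes ∧ 1 ∈ p.ddes

/-- Type '≥2': no descent at positions `0` and `1`. -/
def typeGe2 {n : ℕ} (p : SignedPerm n) : Prop := 0 ∉ p.ddes ∧ 1 ∉ p.ddes

/-- Type '0,≥2': descent at position `0` but not at `1`. -/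
def type0Ge2 {n : ℕ} (p : SignedPerm n) : Prop := 0 ∈ p.ddes ∧ 1 ∉ p.ddes

instance {n : ℕ} (p : SignedPerm n) : Decidable p.inD := by
  unfold SignedPerm.inD; infer_instance
instance {n : ℕ} (p : SignedPerm n) : Decidable p.type1 := by
  unfold SignedPerm.type1; infer_instance
instance {n : ℕ} (p : SignedPerm n) : Decidable p.type01 := by
  unfold SignedPerm.type01; infer_instance
instance {n : ℕ} (p : SignedPerm n) : Decidable p.typeGe2 := by
  unfold SignedPerm.typeGe2; infer_instance
instance {n : ℕ} (p : SignedPerm n) : Decidable p.type0Ge2 := by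
  unfold SignedPerm.type0Ge2; infer_instance

end SignedPerm

/-- The type `D` Eulerian number `D_{n,k}`: the number of elements of `D_n`
with exactly `k` `D`-descents (zero for `k < 0`). -/
def eulerD (n : ℕ) (k : ℤ) : ℕ :=
  (Finset.univ.filter fun p : SignedPerm n => p.inD ∧ (p.d : ℤ) = k).card

/-- The sub-Eulerian number `D_{n,k}^1`. -/
def subEuler1 (n : ℕ) (k : ℤ) : ℕ :=
  (Finset.univ.filter fun p : SignedPerm n => p.inD ∧ p.type1 ∧ (p.d : ℤ) = k).card

/-- The sub-Eulerian number `D_{n,k}^{0,1}`. -/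
def subEuler01 (n : ℕ) (k : ℤ) : ℕ :=
  (Finset.univ.filter fun p : SignedPerm n => p.inD ∧ p.type01 ∧ (p.d : ℤ) = k).card

/-- The sub-Eulerian number `D_{n,k}^{≥2}`. -/
def subEulerGe2 (n : ℕ) (k : ℤ) : ℕ :=
  (Finset.univ.filter fun p : SignedPerm n => p.inD ∧ p.typeGe2 ∧ (p.d : ℤ) = k).card

/-- The sub-Eulerian number `D_{n,k}^{0,≥2}`. -/
def subEuler0Ge2 (n : ℕ) (k : ℤ) : ℕ :=
  (Finset.univ.filter fun p : SignedPerm n => p.inD ∧ p.type0Ge2 ∧ (p.d : ℤ) = k).card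

/-- The type `D` Eulerian polynomial `D_n(t) = Σ_{π ∈ D_n} t^{d(π)}`
(with `D_0(t) = D_1(t) = 1`). -/
noncomputable def polyD (n : ℕ) : Polynomial ℚ :=
  ∑ p ∈ Finset.univ.filter (fun p : SignedPerm n => p.inD), Polynomial.X ^ p.d

/-- The sub-Eulerian polynomial `D_n^1(t)`. -/
noncomputable def polyD1 (n : ℕ) : Polynomial ℚ :=
  ∑ p ∈ Finset.univ.filter (fun p : SignedPerm n => p.inD ∧ p.type1), Polynomial.X ^ p.d

/-- The sub-Eulerian polynomial `D_n^{0,1}(t)`. -/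
noncomputable def polyD01 (n : ℕ) : Polynomial ℚ :=
  ∑ p ∈ Finset.univ.filter (fun p : SignedPerm n => p.inD ∧ p.type01), Polynomial.X ^ p.d

/-- The sub-Eulerian polynomial `D_n^{≥2}(t)`. -/
noncomputable def polyDGe2 (n : ℕ) : Polynomial ℚ :=
  ∑ p ∈ Finset.univ.filter (fun p : SignedPerm n => p.inD ∧ p.typeGe2), Polynomial.X ^ p.d

/-- The sub-Eulerian polynomial `D_n^{0,≥2}(t)`. -/
noncomputable def polyD0Ge2 (n : ℕ) : Polynomial ℚ :=
  ∑ p ∈ Finset.univ.filter (fun p : SignedPerm n => p.inD ∧ p.type0Ge2), Polynomial.X ^ p.d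

namespace SignedPerm

-- new material

def ind {n : ℕ} (p : SignedPerm n) (i : ℕ) : ℕ := if p.entry (i+1) < p.entry i then 1 else 0

lemma d_eq_sum {n : ℕ} (p : SignedPerm n) : p.d = ∑ i ∈ Finset.range n, p.ind i := by
  rw [d, ddes, Finset.card_filter]; rfl

lemma word_le {n : ℕ} (p : SignedPerm n) (j : ℕ) : p.word j ≤ n := by
  rw [word]; split
  · have := (p.1 ⟨j - 1, by omega⟩).isLt
    split <;> push_cast <;> omega
  · positivity

lemma neg_le_word {n : ℕ} (p : SignedPerm n) (j : ℕ) : -(n:ℤ) ≤ p.word j := by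
  rw [word]; split
  · have := (p.1 ⟨j - 1, by omega⟩).isLt
    split <;> push_cast <;> omega
  · simp

lemma word_out {n : ℕ} (p : SignedPerm n) (j : ℕ) (h : ¬(1 ≤ j ∧ j ≤ n)) : p.word j = 0 := by
  rw [word, dif_neg h]

-- insertNth eval lemmas
lemma insertNth_mk_lt {L : ℕ} {α : Type*} (s : Fin (L+1)) (x : α) (f : Fin L → α) (i : ℕ)
    (hi : i < s.val) (hiL : i < L) :
    (s.insertNth x f : Fin (L+1) → α) ⟨i, by omega⟩ = f ⟨i, hiL⟩ := by
  have h : s.succAbove ⟨i, hiL⟩ = ⟨i, by omega⟩ := by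
    rw [Fin.succAbove_of_castSucc_lt]
    · rfl
    · simpa [Fin.lt_def] using hi
  rw [← h, Fin.insertNth_apply_succAbove]

lemma insertNth_mk_gt {L : ℕ} {α : Type*} (s : Fin (L+1)) (x : α) (f : Fin L → α) (i : ℕ)
    (hi : s.val < i) (hiL : i < L + 1) :
    (s.insertNth x f : Fin (L+1) → α) ⟨i, hiL⟩ = f ⟨i - 1, by omega⟩ := by
  have h : s.succAbove ⟨i - 1, by omega⟩ = ⟨i, hiL⟩ := by
    rw [Fin.succAbove_of_le_castSucc]
    · simp only [Fin.succ_mk]; congr 1; omega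
    · simp only [Fin.le_def, Fin.coe_castSucc]; omega
  rw [← h, Fin.insertNth_apply_succAbove]

lemma insertNth_mk_eq {L : ℕ} {α : Type*} (s : Fin (L+1)) (x : α) (f : Fin L → α)
    (hiL : s.val < L + 1) :
    (s.insertNth x f : Fin (L+1) → α) ⟨s.val, hiL⟩ = x := by
  have : (⟨s.val, hiL⟩ : Fin (L+1)) = s := rfl
  rw [this, Fin.insertNth_apply_same]

def insFun {L : ℕ} (σ : Equiv.Perm (Fin L)) (s : Fin (L+1)) : Fin (L+1) → Fin (L+1) :=
  s.insertNth (Fin.last L) (fun i => (σ i).castSucc)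

lemma insFun_bij {L : ℕ} (σ : Equiv.Perm (Fin L)) (s : Fin (L+1)) :
    Function.Bijective (insFun σ s) := by
  rw [Fintype.bijective_iff_surjective_and_card]
  refine ⟨fun v => ?_, rfl⟩
  rcases eq_or_ne v (Fin.last L) with rfl | hv
  · exact ⟨s, Fin.insertNth_apply_same ..⟩
  · obtain ⟨u, rfl⟩ := Fin.exists_castSucc_eq.mpr hv
    exact ⟨s.succAbove (σ.symm u), by simp [insFun, Fin.insertNth_apply_succAbove]⟩

/-- Insert the letter `±(L+2)` at (0-indexed) slot `s`; if the sign `ε` is negative,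
also negate the first letter of the old word. -/
noncomputable def ins {L : ℕ} (p : SignedPerm (L+1)) (ε : Bool) (s : Fin (L+2)) : SignedPerm (L+2) :=
  ⟨Equiv.ofBijective _ (insFun_bij p.1 s),
   s.insertNth ε (if ε then Function.update p.2 0 (!p.2 0) else p.2)⟩

lemma ins_fst {L : ℕ} (p : SignedPerm (L+1)) (ε : Bool) (s : Fin (L+2)) (v : Fin (L+2)) :
    (ins p ε s).1 v = insFun p.1 s v := rfl

lemma ins_snd {L : ℕ} (p : SignedPerm (L+1)) (ε : Bool) (s : Fin (L+2)) (v : Fin (L+2)) :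
    (ins p ε s).2 v = (s.insertNth (α := fun _ => Bool) ε
      (if ε then Function.update p.2 0 (!p.2 0) else p.2) : Fin (L+2) → Bool) v := rfl

-- word of an insertion
lemma word_ins_eq {L : ℕ} (p : SignedPerm (L+1)) (ε : Bool) (s : Fin (L+2)) :
    (ins p ε s).word (s.val + 1) = (if ε then -1 else 1) * (L + 2) := by
  have hs : s.val < L + 2 := s.isLt
  rw [word, dif_pos ⟨by omega, by omega⟩]
  have h1 : (⟨s.val + 1 - 1, by omega⟩ : Fin (L+2)) = ⟨s.val, hs⟩ := rfl
  rw [h1, ins_fst, insFun]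
  rw [insertNth_mk_eq]
  have h2 : (ins p ε s).2 ⟨s.val, hs⟩ = ε := by
    rw [ins_snd]; exact insertNth_mk_eq ..
  rw [h2]
  simp only [Fin.val_last]
  cases ε <;> simp <;> push_cast <;> ring

lemma word_ins_lt {L : ℕ} (p : SignedPerm (L+1)) (ε : Bool) (s : Fin (L+2)) (j : ℕ)
    (h1 : 1 ≤ j) (h2 : j ≤ s.val) :
    (ins p ε s).word j = (if ε = true ∧ j = 1 then -1 else 1) * p.word j := by
  have hs : s.val < L + 2 := s.isLt
  rw [word, word, dif_pos ⟨h1, by omega⟩, dif_pos ⟨h1, by omega⟩]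
  have hperm : (ins p ε s).1 ⟨j - 1, by omega⟩ = ((p.1 ⟨j-1, by omega⟩).castSucc) := by
    rw [ins_fst, insFun]
    exact insertNth_mk_lt s _ _ (j-1) (by omega) (by omega)
  have hsign : (ins p ε s).2 ⟨j - 1, by omega⟩
      = (if ε then Function.update p.2 0 (!p.2 0) else p.2) ⟨j-1, by omega⟩ := by
    rw [ins_snd]
    exact insertNth_mk_lt s _ _ (j-1) (by omega) (by omega)
  rw [hperm, hsign]
  rcases eq_or_ne j 1 with rfl | hj
  · have e0 : (⟨1-1, by omega⟩ : Fin (L+1)) = 0 := rfl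
    rw [e0]
    cases ε <;> cases h : p.2 0 <;>
      simp [Function.update_apply, h] <;> push_cast <;> ring
  · have : (⟨j-1, by omega⟩ : Fin (L+1)) ≠ 0 := by
      simp only [ne_eq, Fin.ext_iff, Fin.val_zero]; omega
    cases ε <;> simp [Function.update_apply, this, hj]

lemma word_ins_gt {L : ℕ} (p : SignedPerm (L+1)) (ε : Bool) (s : Fin (L+2)) (j : ℕ)
    (h1 : s.val + 2 ≤ j) (h2 : j ≤ L + 2) :
    (ins p ε s).word j = (if ε = true ∧ j = 2 then -1 else 1) * p.word (j - 1) := by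
  have hs : s.val < L + 2 := s.isLt
  rw [word, word, dif_pos ⟨by omega, h2⟩, dif_pos ⟨by omega, by omega⟩]
  have hperm : (ins p ε s).1 ⟨j - 1, by omega⟩ = ((p.1 ⟨j-1-1, by omega⟩).castSucc) := by
    rw [ins_fst, insFun]
    exact insertNth_mk_gt s _ _ (j-1) (by omega) (by omega)
  have hsign : (ins p ε s).2 ⟨j - 1, by omega⟩
      = (if ε then Function.update p.2 0 (!p.2 0) else p.2) ⟨j-1-1, by omega⟩ := by
    rw [ins_snd]
    exact insertNth_mk_gt s _ _ (j-1) (by omega) (by omega)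
  rw [hperm, hsign]
  rcases eq_or_ne j 2 with rfl | hj
  · have e0 : (⟨2-1-1, by omega⟩ : Fin (L+1)) = 0 := rfl
    rw [e0]
    cases ε <;> cases h : p.2 0 <;>
      simp [Function.update_apply, h] <;> push_cast <;> ring
  · have : (⟨j-1-1, by omega⟩ : Fin (L+1)) ≠ 0 := by
      simp only [ne_eq, Fin.ext_iff, Fin.val_zero]; omega
    cases ε <;> simp [Function.update_apply, this, hj]

end SignedPerm

-- part 2 (appended to a.lean for testing)
namespace SignedPerm

lemma word_lt_top {L : ℕ} (p : SignedPerm (L+1)) (j : ℕ) : p.word j < ((L:ℤ) + 2) := by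
  have := word_le p j; push_cast at this; omega

lemma neg_top_lt_word {L : ℕ} (p : SignedPerm (L+1)) (j : ℕ) : -((L:ℤ) + 2) < p.word j := by
  have := neg_le_word p j; push_cast at this; omega

lemma ind_eq {n : ℕ} (p : SignedPerm n) (i : ℕ) (hi : 1 ≤ i) :
    p.ind i = if p.word (i+1) < p.word i then 1 else 0 := by
  rw [ind, entry, entry, if_neg (show ¬(i + 1 = 0) by omega), if_neg (show ¬(i = 0) by omega)]

lemma ind_zero {n : ℕ} (p : SignedPerm n) :
    p.ind 0 = if p.word 1 < -(p.word 2) then 1 else 0 := by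
  simp [ind, entry]

lemma sum_range_split {M : Type*} [AddCommMonoid M] (f : ℕ → M) (a b : ℕ) (h : a ≤ b) :
    ∑ i ∈ Finset.range b, f i = ∑ i ∈ Finset.range a, f i + ∑ i ∈ Finset.Ico a b, f i := by
  rw [Finset.range_eq_Ico, Finset.range_eq_Ico]
  exact (Finset.sum_Ico_consecutive f (Nat.zero_le a) h).symm

section Cases

variable {L : ℕ} (p : SignedPerm (L+1)) (ε : Bool) (s : Fin (L+2))

lemma ind_ins_tail (i : ℕ) (h3 : 3 ≤ i) (hsi : s.val + 2 ≤ i) (hi : i ≤ L + 1) :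
    (ins p ε s).ind i = p.ind (i-1) := by
  have e1 : i - 1 + 1 = i := by omega
  rw [ind_eq _ i (by omega), ind_eq _ (i-1) (by omega), e1]
  rw [word_ins_gt p ε s i (by omega) (by omega),
      word_ins_gt p ε s (i+1) (by omega) (by omega)]
  have e2 : i + 1 - 1 = i := by omega
  rw [e2]
  have : ¬(ε = true ∧ i = 2) := by omega
  have h2 : ¬(ε = true ∧ i + 1 = 2) := by omega
  rw [if_neg this, if_neg h2]
  simp

lemma tail_sum (a : ℕ) (ha : 3 ≤ a) (has : s.val + 2 ≤ a) (haL : a ≤ L + 2) :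
    ∑ i ∈ Finset.Ico a (L+2), (ins p ε s).ind i = ∑ i ∈ Finset.Ico (a-1) (L+1), p.ind i := by
  rw [Finset.sum_Ico_eq_sum_range, Finset.sum_Ico_eq_sum_range]
  have e : L + 2 - a = L + 1 - (a - 1) := by omega
  rw [e]
  refine Finset.sum_congr rfl fun i hi => ?_
  rw [Finset.mem_range] at hi
  rw [ind_ins_tail p ε s (a + i) (by omega) (by omega) (by omega)]
  congr 1; omega

lemma ind_ins_head_false (i : ℕ) (hs2 : 2 ≤ s.val) (hi : i + 1 ≤ s.val) :
    (ins p false s).ind i = p.ind i := by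
  rcases Nat.eq_zero_or_pos i with rfl | hpos
  · rw [ind_zero, ind_zero,
      word_ins_lt p false s 1 le_rfl (by omega),
      word_ins_lt p false s 2 (by omega) (by omega)]
    simp
  · rw [ind_eq _ i hpos, ind_eq _ i hpos,
      word_ins_lt p false s i hpos (by omega),
      word_ins_lt p false s (i+1) (by omega) (by omega)]
    have h1 : ¬(false = true ∧ i = 1) := by simp
    have h2 : ¬(false = true ∧ i + 1 = 1) := by simp
    rw [if_neg h1, if_neg h2]
    simp

lemma ind_ins_head_true (i : ℕ) (h2 : 2 ≤ i) (hi : i + 1 ≤ s.val) :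
    (ins p true s).ind i = p.ind i := by
  rw [ind_eq _ i (by omega), ind_eq _ i (by omega),
    word_ins_lt p true s i (by omega) (by omega),
    word_ins_lt p true s (i+1) (by omega) (by omega)]
  rw [if_neg (show ¬(true = true ∧ i = 1) from by rintro ⟨-, h⟩; omega),
      if_neg (show ¬(true = true ∧ i + 1 = 1) from by rintro ⟨-, h⟩; omega)]
  simp

lemma ind_ins_swap0 (hs2 : 2 ≤ s.val) : (ins p true s).ind 0 = p.ind 1 := by
  rw [ind_zero, ind_eq _ 1 le_rfl,
    word_ins_lt p true s 1 le_rfl (by omega),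
    word_ins_lt p true s 2 (by omega) (by omega)]
  rw [if_pos (show true = true ∧ (1:ℕ) = 1 from ⟨rfl, rfl⟩),
      if_neg (show ¬(true = true ∧ (2:ℕ) = 1) from by rintro ⟨-, h⟩; omega)]
  simp only [show (1:ℕ)+1 = 2 from rfl, neg_mul, one_mul]
  split_ifs <;> omega

lemma ind_ins_swap1 (hs2 : 2 ≤ s.val) : (ins p true s).ind 1 = p.ind 0 := by
  rw [ind_eq _ 1 le_rfl, ind_zero,
    word_ins_lt p true s 1 le_rfl (by omega),
    word_ins_lt p true s 2 (by omega) (by omega)]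
  rw [if_pos (show true = true ∧ (1:ℕ) = 1 from ⟨rfl, rfl⟩),
      if_neg (show ¬(true = true ∧ (2:ℕ) = 1) from by rintro ⟨-, h⟩; omega)]
  simp only [show (1:ℕ)+1 = 2 from rfl, neg_mul, one_mul]
  split_ifs <;> omega

end Cases

end SignedPerm

namespace SignedPerm

section DCases

variable {L : ℕ} (p : SignedPerm (L+1)) (s : Fin (L+2))

/-- D1 -/
lemma d_ins_f0 (hL : 1 ≤ L) (hs : s.val = 0) :
    (ins p false s).d + p.ind 0 = p.d + 1 := by
  have w1 : (ins p false s).word 1 = ((L:ℤ)+2) := by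
    have h := word_ins_eq p false s; rw [hs] at h; simpa using h
  have w2 : (ins p false s).word 2 = p.word 1 := by
    have h := word_ins_gt p false s 2 (by omega) (by omega); simpa using h
  have w3 : (ins p false s).word 3 = p.word 2 := by
    have h := word_ins_gt p false s 3 (by omega) (by omega); simpa using h
  have hF0 : (ins p false s).ind 0 = 0 := by
    rw [ind_zero, w1, w2, if_neg]
    have := neg_top_lt_word p 1; omega
  have hF1 : (ins p false s).ind 1 = 1 := by
    rw [ind_eq _ 1 le_rfl, show (1:ℕ)+1 = 2 from rfl, w1, w2, if_pos]
    exact word_lt_top p 1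
  have hF2 : (ins p false s).ind 2 = p.ind 1 := by
    rw [ind_eq _ 2 (by omega), show (2:ℕ)+1 = 3 from rfl, w2, w3,
      ind_eq p 1 le_rfl, show (1:ℕ)+1 = 2 from rfl]
  have ht := tail_sum p false s 3 le_rfl (by omega) (by omega)
  norm_num at ht
  have hτ : (ins p false s).d = (ins p false s).ind 0 + (ins p false s).ind 1
      + (ins p false s).ind 2 + ∑ i ∈ Finset.Ico 3 (L+2), (ins p false s).ind i := by
    rw [d_eq_sum, sum_range_split _ 3 (L+2) (by omega)]
    norm_num [Finset.sum_range_succ]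
  have hπ : p.d = p.ind 0 + p.ind 1 + ∑ i ∈ Finset.Ico 2 (L+1), p.ind i := by
    rw [d_eq_sum, sum_range_split _ 2 (L+1) (by omega)]
    norm_num [Finset.sum_range_succ]
  omega

/-- D3 -/
lemma d_ins_t0 (hL : 1 ≤ L) (hs : s.val = 0) :
    (ins p true s).d + p.ind 1 = p.d + 1 := by
  have w1 : (ins p true s).word 1 = -((L:ℤ)+2) := by
    have h := word_ins_eq p true s; rw [hs] at h
    simpa using h
  have w2 : (ins p true s).word 2 = -(p.word 1) := by
    have h := word_ins_gt p true s 2 (by omega) (by omega); simpa using h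
  have w3 : (ins p true s).word 3 = p.word 2 := by
    have h := word_ins_gt p true s 3 (by omega) (by omega); simpa using h
  have hF0 : (ins p true s).ind 0 = 1 := by
    rw [ind_zero, w1, w2, if_pos]
    have := neg_top_lt_word p 1; omega
  have hF1 : (ins p true s).ind 1 = 0 := by
    rw [ind_eq _ 1 le_rfl, show (1:ℕ)+1 = 2 from rfl, w1, w2, if_neg]
    have := word_lt_top p 1; omega
  have hF2 : (ins p true s).ind 2 = p.ind 0 := by
    rw [ind_eq _ 2 (by omega), show (2:ℕ)+1 = 3 from rfl, w2, w3, ind_zero]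
    split_ifs <;> omega
  have ht := tail_sum p true s 3 le_rfl (by omega) (by omega)
  norm_num at ht
  have hτ : (ins p true s).d = (ins p true s).ind 0 + (ins p true s).ind 1
      + (ins p true s).ind 2 + ∑ i ∈ Finset.Ico 3 (L+2), (ins p true s).ind i := by
    rw [d_eq_sum, sum_range_split _ 3 (L+2) (by omega)]
    norm_num [Finset.sum_range_succ]
  have hπ : p.d = p.ind 0 + p.ind 1 + ∑ i ∈ Finset.Ico 2 (L+1), p.ind i := by
    rw [d_eq_sum, sum_range_split _ 2 (L+1) (by omega)]
    norm_num [Finset.sum_range_succ]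
  omega

/-- D2 -/
lemma d_ins_f1 (hL : 1 ≤ L) (hs : s.val = 1) :
    (ins p false s).d + p.ind 0 + p.ind 1 = p.d + 1 := by
  have w1 : (ins p false s).word 1 = p.word 1 := by
    have h := word_ins_lt p false s 1 le_rfl (by omega); simpa using h
  have w2 : (ins p false s).word 2 = ((L:ℤ)+2) := by
    have h := word_ins_eq p false s; rw [hs] at h; simpa using h
  have w3 : (ins p false s).word 3 = p.word 2 := by
    have h := word_ins_gt p false s 3 (by omega) (by omega); simpa using h
  have hF0 : (ins p false s).ind 0 = 0 := by
    rw [ind_zero, w1, w2, if_neg]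
    have := neg_le_word p 1; push_cast at this; omega
  have hF1 : (ins p false s).ind 1 = 0 := by
    rw [ind_eq _ 1 le_rfl, show (1:ℕ)+1 = 2 from rfl, w1, w2, if_neg]
    have := word_lt_top p 1; omega
  have hF2 : (ins p false s).ind 2 = 1 := by
    rw [ind_eq _ 2 (by omega), show (2:ℕ)+1 = 3 from rfl, w2, w3, if_pos]
    exact word_lt_top p 2
  have ht := tail_sum p false s 3 le_rfl (by omega) (by omega)
  norm_num at ht
  have hτ : (ins p false s).d = (ins p false s).ind 0 + (ins p false s).ind 1
      + (ins p false s).ind 2 + ∑ i ∈ Finset.Ico 3 (L+2), (ins p false s).ind i := by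
    rw [d_eq_sum, sum_range_split _ 3 (L+2) (by omega)]
    norm_num [Finset.sum_range_succ]
  have hπ : p.d = p.ind 0 + p.ind 1 + ∑ i ∈ Finset.Ico 2 (L+1), p.ind i := by
    rw [d_eq_sum, sum_range_split _ 2 (L+1) (by omega)]
    norm_num [Finset.sum_range_succ]
  omega

/-- D4 -/
lemma d_ins_t1 (hL : 1 ≤ L) (hs : s.val = 1) :
    (ins p true s).d + p.ind 0 + p.ind 1 = p.d + 2 := by
  have w1 : (ins p true s).word 1 = -(p.word 1) := by
    have h := word_ins_lt p true s 1 le_rfl (by omega); simpa using h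
  have w2 : (ins p true s).word 2 = -((L:ℤ)+2) := by
    have h := word_ins_eq p true s; rw [hs] at h; simpa using h
  have w3 : (ins p true s).word 3 = p.word 2 := by
    have h := word_ins_gt p true s 3 (by omega) (by omega); simpa using h
  have hF0 : (ins p true s).ind 0 = 1 := by
    rw [ind_zero, w1, w2, if_pos]
    have := neg_top_lt_word p 1; omega
  have hF1 : (ins p true s).ind 1 = 1 := by
    rw [ind_eq _ 1 le_rfl, show (1:ℕ)+1 = 2 from rfl, w1, w2, if_pos]
    have := word_lt_top p 1; omega
  have hF2 : (ins p true s).ind 2 = 0 := by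
    rw [ind_eq _ 2 (by omega), show (2:ℕ)+1 = 3 from rfl, w2, w3, if_neg]
    have := neg_top_lt_word p 2; omega
  have ht := tail_sum p true s 3 le_rfl (by omega) (by omega)
  norm_num at ht
  have hτ : (ins p true s).d = (ins p true s).ind 0 + (ins p true s).ind 1
      + (ins p true s).ind 2 + ∑ i ∈ Finset.Ico 3 (L+2), (ins p true s).ind i := by
    rw [d_eq_sum, sum_range_split _ 3 (L+2) (by omega)]
    norm_num [Finset.sum_range_succ]
  have hπ : p.d = p.ind 0 + p.ind 1 + ∑ i ∈ Finset.Ico 2 (L+1), p.ind i := by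
    rw [d_eq_sum, sum_range_split _ 2 (L+1) (by omega)]
    norm_num [Finset.sum_range_succ]
  omega

/-- D5 -/
lemma d_ins_mid (ε : Bool) (hs2 : 2 ≤ s.val) (hsL : s.val ≤ L) :
    (ins p ε s).d + p.ind s.val = p.d + 1 := by
  have hwS : (ins p ε s).word s.val = p.word s.val := by
    have h := word_ins_lt p ε s s.val (by omega) le_rfl
    rw [h, if_neg (show ¬(ε = true ∧ s.val = 1) from by rintro ⟨-, h2⟩; omega), one_mul]
  have hwS1 : (ins p ε s).word (s.val+1) = (if ε then -1 else 1) * ((L:ℤ)+2) :=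
    word_ins_eq p ε s
  have hwS2 : (ins p ε s).word (s.val+2) = p.word (s.val+1) := by
    have h := word_ins_gt p ε s (s.val+2) (by omega) (by omega)
    rw [h, if_neg (show ¬(ε = true ∧ s.val+2 = 2) from by rintro ⟨-, h2⟩; omega), one_mul,
      show s.val+2-1 = s.val+1 from rfl]
  have hFsum : (ins p ε s).ind s.val + (ins p ε s).ind (s.val+1) = 1 := by
    rw [ind_eq _ s.val (by omega), ind_eq _ (s.val+1) (by omega),
      show s.val+1+1 = s.val+2 from rfl, hwS, hwS1, hwS2]
    have h1 := word_lt_top p s.val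
    have h2 := word_lt_top p (s.val+1)
    have h3 := neg_top_lt_word p s.val
    have h4 := neg_top_lt_word p (s.val+1)
    cases ε <;> simp only [if_true, if_false, Bool.false_eq_true, neg_mul, one_mul] <;>
      split_ifs <;> omega
  have hhead : ∑ i ∈ Finset.range s.val, (ins p ε s).ind i
      = ∑ i ∈ Finset.range s.val, p.ind i := by
    cases ε
    · exact Finset.sum_congr rfl fun i hi => by
        rw [Finset.mem_range] at hi
        exact ind_ins_head_false p s i hs2 (by omega)
    · rw [sum_range_split _ 2 s.val hs2, sum_range_split (p.ind) 2 s.val hs2]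
      have h2 : ∑ i ∈ Finset.range 2, (ins p true s).ind i
          = ∑ i ∈ Finset.range 2, p.ind i := by
        rw [Finset.sum_range_succ, Finset.sum_range_succ, Finset.sum_range_zero,
          Finset.sum_range_succ, Finset.sum_range_succ, Finset.sum_range_zero,
          ind_ins_swap0 p s hs2, ind_ins_swap1 p s hs2]
        omega
      rw [h2]
      congr 1
      refine Finset.sum_congr rfl fun i hi => ?_
      rw [Finset.mem_Ico] at hi
      exact ind_ins_head_true p s i hi.1 (by omega)
  have ht := tail_sum p ε s (s.val+2) (by omega) le_rfl (by omega)
  rw [show s.val+2-1 = s.val+1 from by omega] at ht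
  have hτ : (ins p ε s).d = ∑ i ∈ Finset.range s.val, (ins p ε s).ind i
      + (ins p ε s).ind s.val + (ins p ε s).ind (s.val+1)
      + ∑ i ∈ Finset.Ico (s.val+2) (L+2), (ins p ε s).ind i := by
    rw [d_eq_sum, sum_range_split _ (s.val+2) (L+2) (by omega),
      show s.val+2 = s.val+1+1 from rfl, Finset.sum_range_succ, Finset.sum_range_succ]
  have hπ : p.d = ∑ i ∈ Finset.range s.val, p.ind i + p.ind s.val
      + ∑ i ∈ Finset.Ico (s.val+1) (L+1), p.ind i := by
    rw [d_eq_sum, sum_range_split _ (s.val+1) (L+1) (by omega), Finset.sum_range_succ]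
  omega

/-- D6 -/
lemma d_ins_flast (hL : 1 ≤ L) (hs : s.val = L+1) :
    (ins p false s).d = p.d := by
  have hhead : ∑ i ∈ Finset.range (L+1), (ins p false s).ind i
      = ∑ i ∈ Finset.range (L+1), p.ind i :=
    Finset.sum_congr rfl fun i hi => by
      rw [Finset.mem_range] at hi
      exact ind_ins_head_false p s i (by omega) (by omega)
  have wtop : (ins p false s).word (L+2) = ((L:ℤ)+2) := by
    have h := word_ins_eq p false s; rw [hs] at h; simpa using h
  have wl : (ins p false s).word (L+1) = p.word (L+1) := by
    have h := word_ins_lt p false s (L+1) (by omega) (by omega); simpa using h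
  have hF : (ins p false s).ind (L+1) = 0 := by
    rw [ind_eq _ (L+1) (by omega),
      show (ins p false s).word (L+1+1) = ((L:ℤ)+2) from wtop, wl, if_neg]
    have := word_lt_top p (L+1); omega
  have hico : Finset.Ico (L+1) (L+2) = {L+1} := by
    ext x; simp only [Finset.mem_Ico, Finset.mem_singleton]; omega
  rw [d_eq_sum, sum_range_split _ (L+1) (L+2) (by omega), hico, Finset.sum_singleton,
    hhead, hF, d_eq_sum]
  omega

/-- D7 -/
lemma d_ins_tlast (hL : 1 ≤ L) (hs : s.val = L+1) :
    (ins p true s).d = p.d + 1 := by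
  have hhead : ∑ i ∈ Finset.range (L+1), (ins p true s).ind i
      = ∑ i ∈ Finset.range (L+1), p.ind i := by
    rw [sum_range_split _ 2 (L+1) (by omega), sum_range_split (p.ind) 2 (L+1) (by omega)]
    have h2 : ∑ i ∈ Finset.range 2, (ins p true s).ind i
        = ∑ i ∈ Finset.range 2, p.ind i := by
      rw [Finset.sum_range_succ, Finset.sum_range_succ, Finset.sum_range_zero,
        Finset.sum_range_succ, Finset.sum_range_succ, Finset.sum_range_zero,
        ind_ins_swap0 p s (by omega), ind_ins_swap1 p s (by omega)]
      omega
    rw [h2]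
    congr 1
    refine Finset.sum_congr rfl fun i hi => ?_
    rw [Finset.mem_Ico] at hi
    exact ind_ins_head_true p s i hi.1 (by omega)
  have wtop : (ins p true s).word (L+2) = -((L:ℤ)+2) := by
    have h := word_ins_eq p true s; rw [hs] at h; simpa using h
  have wl : (ins p true s).word (L+1) = p.word (L+1) := by
    have h := word_ins_lt p true s (L+1) (by omega) (by omega)
    rw [h, if_neg (show ¬(true = true ∧ L+1 = 1) from by rintro ⟨-, h2⟩; omega), one_mul]
  have hF : (ins p true s).ind (L+1) = 1 := by
    rw [ind_eq _ (L+1) (by omega),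
      show (ins p true s).word (L+1+1) = -((L:ℤ)+2) from wtop, wl, if_pos]
    exact neg_top_lt_word p (L+1)
  have hico : Finset.Ico (L+1) (L+2) = {L+1} := by
    ext x; simp only [Finset.mem_Ico, Finset.mem_singleton]; omega
  rw [d_eq_sum, sum_range_split _ (L+1) (L+2) (by omega), hico, Finset.sum_singleton,
    hhead, hF, d_eq_sum]

end DCases

end SignedPerm

namespace SignedPerm

lemma inD_ins_iff {L : ℕ} (p : SignedPerm (L+1)) (ε : Bool) (s : Fin (L+2)) :
    (ins p ε s).inD ↔ p.inD := by
  unfold inD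
  rw [Finset.card_filter, Finset.card_filter]
  rw [Fin.sum_univ_succAbove (fun i => if (ins p ε s).2 i = true then 1 else 0) s]
  have h1 : (ins p ε s).2 s = ε := by
    rw [ins_snd]; exact Fin.insertNth_apply_same ..
  have h2 : ∀ i : Fin (L+1), (ins p ε s).2 (s.succAbove i)
      = (if ε then Function.update p.2 0 (!p.2 0) else p.2) i := by
    intro i; rw [ins_snd]; exact Fin.insertNth_apply_succAbove ..
  simp only [h1, h2]
  cases ε
  · simp
  · simp only [if_true]
    rw [Fin.sum_univ_succAbove (fun i => if Function.update p.2 0 (!p.2 0) i = true then 1 else 0) 0,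
        Fin.sum_univ_succAbove (fun i => if p.2 i = true then 1 else 0) 0]
    have h3 : ∀ i : Fin L, Function.update p.2 0 (!p.2 0) ((0:Fin (L+1)).succAbove i)
        = p.2 ((0:Fin (L+1)).succAbove i) := by
      intro i
      rw [Function.update_apply, if_neg]
      exact Fin.succAbove_ne 0 i
    simp only [h3, Function.update_self]
    cases h : p.2 0 <;> simp [h, Nat.even_iff, Nat.even_add] <;> omega

/-- deletion of the letter of maximal absolute value -/
noncomputable def del {L : ℕ} (τ : SignedPerm (L+2)) : SignedPerm (L+1) × Bool × Fin (L+2) :=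
  let s : Fin (L+2) := τ.1.symm (Fin.last (L+1))
  let ε : Bool := τ.2 s
  let g : Fin (L+1) → Bool := fun i => τ.2 (s.succAbove i)
  ⟨⟨Equiv.ofBijective
      (fun i => Fin.castPred (τ.1 (s.succAbove i)) (by
        intro h
        have : s.succAbove i = s := by
          have := τ.1.injective (a₁ := s.succAbove i) (a₂ := s)
          apply this
          rw [h]
          show _ = τ.1 (τ.1.symm (Fin.last (L+1)))
          rw [Equiv.apply_symm_apply]
        exact Fin.succAbove_ne s i this))
      (by
        rw [Fintype.bijective_iff_injective_and_card]
        refine ⟨fun a b hab => ?_, rfl⟩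
        have h2 : τ.1 (s.succAbove a) = τ.1 (s.succAbove b) := by
          have := congrArg Fin.castSucc hab
          rwa [Fin.castSucc_castPred, Fin.castSucc_castPred] at this
        have := τ.1.injective h2
        exact Fin.succAbove_right_injective (p := s) this),
    if ε then Function.update g 0 (!g 0) else g⟩, ε, s⟩

lemma del_snd_snd {L : ℕ} (τ : SignedPerm (L+2)) :
    (del τ).2.2 = τ.1.symm (Fin.last (L+1)) := rfl

lemma del_snd_fst {L : ℕ} (τ : SignedPerm (L+2)) :
    (del τ).2.1 = τ.2 (τ.1.symm (Fin.last (L+1))) := rfl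

lemma del_fst_fst {L : ℕ} (τ : SignedPerm (L+2)) (i : Fin (L+1)) :
    ((del τ).1.1 i).castSucc = τ.1 ((τ.1.symm (Fin.last (L+1))).succAbove i) := by
  have hne : τ.1 ((τ.1.symm (Fin.last (L+1))).succAbove i) ≠ Fin.last (L+1) := by
    intro h
    have h2 : (τ.1.symm (Fin.last (L+1))).succAbove i = τ.1.symm (Fin.last (L+1)) := by
      apply τ.1.injective
      rw [h, Equiv.apply_symm_apply]
    exact Fin.succAbove_ne _ i h2
  show Fin.castSucc (Fin.castPred _ hne) = _
  exact Fin.castSucc_castPred _ hne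

lemma del_fst_snd {L : ℕ} (τ : SignedPerm (L+2)) :
    (del τ).1.2 = (if τ.2 (τ.1.symm (Fin.last (L+1))) then
        Function.update (fun i => τ.2 ((τ.1.symm (Fin.last (L+1))).succAbove i)) 0
          (!τ.2 ((τ.1.symm (Fin.last (L+1))).succAbove 0))
      else fun i => τ.2 ((τ.1.symm (Fin.last (L+1))).succAbove i)) := rfl

lemma del_ins {L : ℕ} (p : SignedPerm (L+1)) (ε : Bool) (s : Fin (L+2)) :
    del (ins p ε s) = (p, ε, s) := by
  have hs : (ins p ε s).1.symm (Fin.last (L+1)) = s := by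
    rw [Equiv.symm_apply_eq]
    show Fin.last (L+1) = insFun p.1 s s
    unfold insFun
    exact (Fin.insertNth_apply_same (α := fun _ => Fin (L+2)) s (Fin.last (L+1))
      (fun i => (p.1 i).castSucc)).symm
  have hε : (ins p ε s).2 s = ε := by
    rw [ins_snd]; exact Fin.insertNth_apply_same ..
  have hg : ∀ i : Fin (L+1), (ins p ε s).2 (s.succAbove i)
      = (if ε then Function.update p.2 0 (!p.2 0) else p.2) i := by
    intro i; rw [ins_snd]; exact Fin.insertNth_apply_succAbove ..
  have hperm : ∀ i : Fin (L+1), (ins p ε s).1 (s.succAbove i) = (p.1 i).castSucc := by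
    intro i; show insFun p.1 s (s.succAbove i) = _
    exact Fin.insertNth_apply_succAbove ..
  refine Prod.ext (Prod.ext ?_ ?_) (Prod.ext ?_ ?_)
  · apply Equiv.ext
    intro i
    apply Fin.castSucc_injective
    rw [del_fst_fst, hs, hperm i]
  · rw [del_fst_snd, hs, hε]
    funext i
    cases ε
    · simp only [Bool.false_eq_true, if_false, hg]
    · simp only [if_true, hg]
      rcases eq_or_ne i 0 with rfl | hi
      · simp
      · simp [Function.update_of_ne hi]
  · show (del (ins p ε s)).2.1 = ε
    rw [del_snd_fst, hs, hε]
  · show (del (ins p ε s)).2.2 = s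
    rw [del_snd_snd, hs]

lemma ins_del {L : ℕ} (τ : SignedPerm (L+2)) :
    ins (del τ).1 (del τ).2.1 (del τ).2.2 = τ := by
  set s : Fin (L+2) := τ.1.symm (Fin.last (L+1)) with hsdef
  have hts : τ.1 s = Fin.last (L+1) := Equiv.apply_symm_apply ..
  refine Prod.ext ?_ ?_
  · apply Equiv.ext
    intro v
    show insFun (del τ).1.1 ((del τ).2.2) v = τ.1 v
    rw [show (del τ).2.2 = s from rfl]
    rcases eq_or_ne v s with rfl | hv
    · rw [insFun, Fin.insertNth_apply_same, hts]
    · obtain ⟨u, rfl⟩ := Fin.exists_succAbove_eq hv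
      rw [insFun, Fin.insertNth_apply_succAbove]
      show ((del τ).1.1 u).castSucc = _
      rw [del_fst_fst]
  · show ((del τ).2.2).insertNth (α := fun _ => Bool) ((del τ).2.1)
        (if (del τ).2.1 then Function.update (del τ).1.2 0 (!(del τ).1.2 0)
          else (del τ).1.2) = τ.2
    rw [show (del τ).2.2 = s from rfl, show (del τ).2.1 = τ.2 s from rfl]
    have hq : (del τ).1.2 = (if τ.2 s then Function.update (fun i => τ.2 (s.succAbove i)) 0
        (!τ.2 (s.succAbove 0)) else fun i => τ.2 (s.succAbove i)) := rfl
    funext v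
    rcases eq_or_ne v s with rfl | hv
    · rw [Fin.insertNth_apply_same]
    · obtain ⟨u, rfl⟩ := Fin.exists_succAbove_eq hv
      rw [Fin.insertNth_apply_succAbove, hq]
      cases h : τ.2 s
      · simp only [Bool.false_eq_true, if_false]
      · simp only [if_true]
        rcases eq_or_ne u 0 with rfl | hu
        · simp
        · simp [Function.update_of_ne hu]

end SignedPerm

namespace SignedPerm

lemma sum_Ico_split_top {M : Type*} [AddCommMonoid M] (f : ℕ → M) (a b c : ℕ)
    (hab : a ≤ b) (hbc : c = b + 1) :
    ∑ i ∈ Finset.Ico a c, f i = ∑ i ∈ Finset.Ico a b, f i + f b := by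
  rw [hbc]; exact Finset.sum_Ico_succ_top hab f

lemma ind_mem {n : ℕ} (p : SignedPerm n) (i : ℕ) (hi : i < n) :
    p.ind i = if i ∈ p.ddes then 1 else 0 := by
  rw [ind, ddes]
  by_cases h : p.entry (i+1) < p.entry i
  · rw [if_pos h]
    have hm : i ∈ Finset.filter (fun i => p.entry (i + 1) < p.entry i) (Finset.range n) :=
      Finset.mem_filter.mpr ⟨Finset.mem_range.mpr hi, h⟩
    rw [if_pos hm]
  · rw [if_neg h]
    have hm : i ∉ Finset.filter (fun i => p.entry (i + 1) < p.entry i) (Finset.range n) :=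
      fun hc => h (Finset.mem_filter.mp hc).2
    rw [if_neg hm]

section Fiber

variable {L : ℕ} (p : SignedPerm (L+1))

/-- the number of descents in positions `{2,…,L}` -/
def kval : ℕ := ((Finset.Ico 2 (L+1)).filter (· ∈ p.ddes)).card

lemma k_le (hL : 1 ≤ L) : p.kval + (L - 1 - p.kval) = L - 1 := by
  have h : p.kval ≤ L - 1 := by
    have := Finset.card_filter_le (Finset.Ico 2 (L+1)) (· ∈ p.ddes)
    rwa [Nat.card_Ico, show L + 1 - 2 = L - 1 from by omega] at this
  omega

lemma d_eq_kab (hL : 1 ≤ L) : p.d = p.kval + p.ind 0 + p.ind 1 := by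
  have h1 : p.d = p.ind 0 + p.ind 1 + ∑ i ∈ Finset.Ico 2 (L+1), p.ind i := by
    rw [d_eq_sum, sum_range_split _ 2 (L+1) (by omega)]
    norm_num [Finset.sum_range_succ]
  have h2 : ∑ i ∈ Finset.Ico 2 (L+1), p.ind i = p.kval := by
    rw [kval, Finset.card_filter]
    refine Finset.sum_congr rfl fun i hi => ?_
    rw [Finset.mem_Ico] at hi
    exact ind_mem p i (by omega)
  omega

lemma d_ins_mid_ite (ε : Bool) (j : ℕ) (h2 : 2 ≤ j) (hj : j ≤ L) :
    (ins p ε ⟨j, by omega⟩).d = if j ∈ p.ddes then p.d else p.d + 1 := by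
  have h := d_ins_mid p ⟨j, by omega⟩ ε h2 hj
  rw [ind_mem p j (by omega)] at h
  split_ifs at h ⊢ <;> omega

end Fiber

end SignedPerm

namespace SignedPerm
open Polynomial

set_option maxHeartbeats 1000000 in
lemma fiber {L : ℕ} (p : SignedPerm (L+1)) (hL : 1 ≤ L) :
    ∑ εs : Bool × Fin (L+2), (X:ℚ[X])^((ins p εs.1 εs.2).d + 1)
      = (C (2*((L:ℚ)+2) - 1) * X + 1) * (X * X^p.d)
        + 2*X^2*(1-X) * derivative ((X:ℚ[X])^p.d)
        + (1-X) * ((if p.type01 then (X:ℚ[X])^p.d else 0)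
            - X^2 * (if p.typeGe2 then (X:ℚ[X])^p.d else 0)) := by
  have hkm := k_le p hL
  set k := p.kval with hk
  set m := L - 1 - p.kval with hmdef
  have hIco : ∑ j ∈ Finset.Ico 2 (L+1), (X:ℚ[X])^((if j ∈ p.ddes then p.d else p.d + 1) + 1)
      = C (k:ℚ) * X^(p.d+1) + C (m:ℚ) * X^(p.d+2) := by
    have h1 : ∀ j, (X:ℚ[X])^((if j ∈ p.ddes then p.d else p.d + 1) + 1)
        = if j ∈ p.ddes then (X:ℚ[X])^(p.d+1) else (X:ℚ[X])^(p.d+2) := by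
      intro j; split_ifs <;> rfl
    simp only [h1]
    rw [Finset.sum_ite, Finset.sum_const, Finset.sum_const]
    have hc1 : (Finset.filter (fun j => j ∈ p.ddes) (Finset.Ico 2 (L+1))).card = k := rfl
    have hc2 : (Finset.filter (fun j => j ∉ p.ddes) (Finset.Ico 2 (L+1))).card = m := by
      have h3 := Finset.card_filter_add_card_filter_not
        (s := Finset.Ico 2 (L+1)) (p := (· ∈ p.ddes))
      rw [Nat.card_Ico] at h3
      have hc1' : (Finset.filter (fun j => j ∈ p.ddes) (Finset.Ico 2 (L+1))).card = k := rfl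
      omega
    rw [hc1, hc2, nsmul_eq_mul, nsmul_eq_mul, ← C_eq_natCast, ← C_eq_natCast]
  have key : ∀ ε : Bool, ∑ s : Fin (L+2), (X:ℚ[X])^((ins p ε s).d + 1)
      = (X:ℚ[X])^((ins p ε 0).d + 1) + (X:ℚ[X])^((ins p ε 1).d + 1)
        + (C (k:ℚ) * X^(p.d+1) + C (m:ℚ) * X^(p.d+2))
        + (X:ℚ[X])^((ins p ε (Fin.last (L+1))).d + 1) := by
    intro ε
    have h0 : ∑ s : Fin (L+2), (X:ℚ[X])^((ins p ε s).d + 1)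
        = ∑ j ∈ Finset.range (L+2),
            (fun j => if h : j < L+2 then (X:ℚ[X])^((ins p ε ⟨j,h⟩).d + 1) else 0) j := by
      rw [← Fin.sum_univ_eq_sum_range]
      refine Finset.sum_congr rfl fun s _ => ?_
      rw [dif_pos s.isLt]
    rw [h0, sum_range_split _ 2 (L+2) (by omega),
      sum_Ico_split_top _ 2 (L+1) (L+2) (by omega) rfl,
      Finset.sum_range_succ, Finset.sum_range_one]
    beta_reduce
    rw [dif_pos (show (0:ℕ) < L+2 by omega), dif_pos (show (1:ℕ) < L+2 by omega),
      dif_pos (show L+1 < L+2 by omega)]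
    have e0 : (⟨0, show (0:ℕ) < L+2 by omega⟩ : Fin (L+2)) = 0 := by ext; simp
    have e1 : (⟨1, show (1:ℕ) < L+2 by omega⟩ : Fin (L+2)) = 1 := by ext; simp
    have eL : (⟨L+1, show L+1 < L+2 by omega⟩ : Fin (L+2)) = Fin.last (L+1) := by ext; simp
    rw [e0, e1, eL]
    have hmid : ∑ j ∈ Finset.Ico 2 (L+1),
        (fun j => if h : j < L+2 then (X:ℚ[X])^((ins p ε ⟨j,h⟩).d + 1) else 0) j
        = ∑ j ∈ Finset.Ico 2 (L+1), (X:ℚ[X])^((if j ∈ p.ddes then p.d else p.d + 1) + 1) := by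
      refine Finset.sum_congr rfl fun j hj => ?_
      rw [Finset.mem_Ico] at hj
      beta_reduce
      rw [dif_pos (show j < L+2 by omega), d_ins_mid_ite p ε j hj.1 (by omega)]
    rw [hmid, hIco]
    ring
  simp only [Fintype.sum_prod_type, Fintype.sum_bool]
  rw [key true, key false]
  have hv0 : ((0 : Fin (L+2)) : ℕ) = 0 := by simp
  have hv1 : ((1 : Fin (L+2)) : ℕ) = 1 := by simp
  have hvL : ((Fin.last (L+1) : Fin (L+2)) : ℕ) = L+1 := by simp
  have hd := d_eq_kab p hL
  rw [← hk] at hd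
  have hE3 : (ins p false (Fin.last (L+1))).d = p.d := d_ins_flast p _ hL hvL
  have hE6 : (ins p true (Fin.last (L+1))).d = p.d + 1 := d_ins_tlast p _ hL hvL
  have hD1 := d_ins_f0 p 0 hL hv0
  have hD2 := d_ins_f1 p 1 hL hv1
  have hD3 := d_ins_t0 p 0 hL hv0
  have hD4 := d_ins_t1 p 1 hL hv1
  have hLcast : ((L : ℕ) : ℚ[X]) = ((k + m + 1 : ℕ) : ℚ[X]) := by
    congr 1; omega
  by_cases h0 : 0 ∈ p.ddes <;> by_cases h1 : 1 ∈ p.ddes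
  · -- type 0,1
    have ha : p.ind 0 = 1 := by rw [ind_mem p 0 (by omega), if_pos h0]
    have hb : p.ind 1 = 1 := by rw [ind_mem p 1 (by omega), if_pos h1]
    have hdk : p.d = k + 2 := by omega
    have E1 : (ins p false 0).d = k + 2 := by omega
    have E2 : (ins p false 1).d = k + 1 := by omega
    have E4 : (ins p true 0).d = k + 2 := by omega
    have E5 : (ins p true 1).d = k + 2 := by omega
    rw [E1, E2, E4, E5, hE3, hE6, hdk,
      if_pos (show p.type01 from ⟨h0, h1⟩),
      if_neg (show ¬p.typeGe2 from fun h => h.1 h0)]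
    rw [derivative_X_pow, show k+2-1 = k+1 from rfl]
    simp only [map_sub, map_mul, map_add, map_one, map_ofNat, C_eq_natCast, Nat.cast_ofNat]
    rw [hLcast]
    push_cast
    ring
  · -- type 0,≥2
    have ha : p.ind 0 = 1 := by rw [ind_mem p 0 (by omega), if_pos h0]
    have hb : p.ind 1 = 0 := by rw [ind_mem p 1 (by omega), if_neg h1]
    have hdk : p.d = k + 1 := by omega
    have E1 : (ins p false 0).d = k + 1 := by omega
    have E2 : (ins p false 1).d = k + 1 := by omega
    have E4 : (ins p true 0).d = k + 2 := by omega
    have E5 : (ins p true 1).d = k + 2 := by omega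
    rw [E1, E2, E4, E5, hE3, hE6, hdk,
      if_neg (show ¬p.type01 from fun h => h1 h.2),
      if_neg (show ¬p.typeGe2 from fun h => h.1 h0)]
    rw [derivative_X_pow, show k+1-1 = k from rfl]
    simp only [map_sub, map_mul, map_add, map_one, map_ofNat, C_eq_natCast, Nat.cast_ofNat]
    rw [hLcast]
    push_cast
    ring
  · -- type 1
    have ha : p.ind 0 = 0 := by rw [ind_mem p 0 (by omega), if_neg h0]
    have hb : p.ind 1 = 1 := by rw [ind_mem p 1 (by omega), if_pos h1]
    have hdk : p.d = k + 1 := by omega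
    have E1 : (ins p false 0).d = k + 2 := by omega
    have E2 : (ins p false 1).d = k + 1 := by omega
    have E4 : (ins p true 0).d = k + 1 := by omega
    have E5 : (ins p true 1).d = k + 2 := by omega
    rw [E1, E2, E4, E5, hE3, hE6, hdk,
      if_neg (show ¬p.type01 from fun h => h0 h.1),
      if_neg (show ¬p.typeGe2 from fun h => h.2 h1)]
    rw [derivative_X_pow, show k+1-1 = k from rfl]
    simp only [map_sub, map_mul, map_add, map_one, map_ofNat, C_eq_natCast, Nat.cast_ofNat]
    rw [hLcast]
    push_cast
    ring
  · -- type ≥2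
    have ha : p.ind 0 = 0 := by rw [ind_mem p 0 (by omega), if_neg h0]
    have hb : p.ind 1 = 0 := by rw [ind_mem p 1 (by omega), if_neg h1]
    have hdk : p.d = k := by omega
    have E1 : (ins p false 0).d = k + 1 := by omega
    have E2 : (ins p false 1).d = k + 1 := by omega
    have E4 : (ins p true 0).d = k + 1 := by omega
    have E5 : (ins p true 1).d = k + 2 := by omega
    rw [E1, E2, E4, E5, hE3, hE6, hdk,
      if_neg (show ¬p.type01 from fun h => h0 h.1),
      if_pos (show p.typeGe2 from ⟨h0, h1⟩)]
    rcases Nat.eq_zero_or_pos k with hk0 | hkpos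
    · rw [hk0]
      rw [derivative_X_pow, show 0-1 = 0 from rfl]
      simp only [map_sub, map_mul, map_add, map_one, map_ofNat, C_eq_natCast, Nat.cast_ofNat,
        Nat.cast_zero, map_zero]
      rw [hLcast, hk0]
      push_cast
      ring
    · obtain ⟨k', hk'⟩ : ∃ k', k = k' + 1 := ⟨k - 1, by omega⟩
      rw [hk']
      rw [derivative_X_pow, show k'+1-1 = k' from rfl]
      simp only [map_sub, map_mul, map_add, map_one, map_ofNat, C_eq_natCast, Nat.cast_ofNat]
      rw [hLcast, hk']
      push_cast
      ring

end SignedPerm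

open Polynomial in
/-- **Corollary 4.6.** Recurrence for the type `D` Eulerian polynomials, cleared of
the denominator `t`:
`t·D_n(t) = [(2n-1)t+1]·t·D_{n-1}(t) + 2t²(1-t)·D_{n-1}'(t) + (1-t)·[D_{n-1}^{0,1}(t) - t²·D_{n-1}^{≥2}(t)]`. -/
theorem polyD_recurrence (n : ℕ) (hn : 3 ≤ n) :
    X * polyD n = (C (2 * (n : ℚ) - 1) * X + 1) * (X * polyD (n - 1))
      + 2 * X ^ 2 * (1 - X) * derivative (polyD (n - 1))
      + (1 - X) * (polyD01 (n - 1) - X ^ 2 * polyDGe2 (n - 1)) := by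
  classical
  obtain ⟨L, rfl⟩ : ∃ L, n = L + 2 := ⟨n - 2, by omega⟩
  have hL : 1 ≤ L := by omega
  rw [show L + 2 - 1 = L + 1 from rfl]
  have hLHS : X * polyD (L+2)
      = ∑ τ ∈ Finset.univ.filter (fun τ : SignedPerm (L+2) => τ.inD), (X:ℚ[X])^(τ.d+1) := by
    rw [polyD, Finset.mul_sum]
    exact Finset.sum_congr rfl fun τ _ => by rw [pow_succ, mul_comm]
  have hBij : ∑ τ ∈ Finset.univ.filter (fun τ : SignedPerm (L+2) => τ.inD), (X:ℚ[X])^(τ.d+1)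
      = ∑ q ∈ (Finset.univ.filter (fun p : SignedPerm (L+1) => p.inD))
            ×ˢ (Finset.univ : Finset (Bool × Fin (L+2))),
          (X:ℚ[X])^((SignedPerm.ins q.1 q.2.1 q.2.2).d + 1) := by
    refine Finset.sum_nbij'
      (fun τ => ((SignedPerm.del τ).1, (SignedPerm.del τ).2.1, (SignedPerm.del τ).2.2))
      (fun q => SignedPerm.ins q.1 q.2.1 q.2.2) ?_ ?_ ?_ ?_ ?_
    · intro τ hτ
      rw [Finset.mem_filter] at hτ
      rw [Finset.mem_product, Finset.mem_filter]
      refine ⟨⟨Finset.mem_univ _, ?_⟩, Finset.mem_univ _⟩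
      have h2 := hτ.2
      rw [← SignedPerm.ins_del τ] at h2
      exact (SignedPerm.inD_ins_iff _ _ _).mp h2
    · intro q hq
      rw [Finset.mem_product, Finset.mem_filter] at hq
      rw [Finset.mem_filter]
      exact ⟨Finset.mem_univ _, (SignedPerm.inD_ins_iff _ _ _).mpr hq.1.2⟩
    · intro τ _
      exact SignedPerm.ins_del τ
    · intro q _
      beta_reduce
      rw [SignedPerm.del_ins]
    · intro τ _
      rw [SignedPerm.ins_del τ]
  rw [hLHS, hBij, Finset.sum_product]
  rw [Finset.sum_congr rfl fun π _ => SignedPerm.fiber π hL]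
  have h01 : polyD01 (L+1) = ∑ π ∈ Finset.univ.filter (fun p : SignedPerm (L+1) => p.inD),
      if π.type01 then (X:ℚ[X])^π.d else 0 := by
    rw [polyD01, ← Finset.sum_filter]
    congr 1
    rw [Finset.filter_filter]
  have hGe2 : polyDGe2 (L+1) = ∑ π ∈ Finset.univ.filter (fun p : SignedPerm (L+1) => p.inD),
      if π.typeGe2 then (X:ℚ[X])^π.d else 0 := by
    rw [polyDGe2, ← Finset.sum_filter]
    congr 1
    rw [Finset.filter_filter]
  have hder : derivative (polyD (L+1))
      = ∑ π ∈ Finset.univ.filter (fun p : SignedPerm (L+1) => p.inD),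
          derivative ((X:ℚ[X])^π.d) := by
    rw [polyD, map_sum]
  have hc : ((L + 2 : ℕ) : ℚ) = (L:ℚ) + 2 := by push_cast; ring
  rw [hder, h01, hGe2, polyD, hc]
  simp only [Finset.mul_sum, ← Finset.sum_sub_distrib, ← Finset.sum_add_distrib]
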